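/- Let n ≥ 2, let r ≡ 2 (mod 4), r ≥ 2, and let π ∈ A_{r,n}. Then ℓ_𝒜(π) = μ(π), where ℓ_𝒜(π) is the word length of π with respect to 𝒜 = {a_0, a_1, a_1^{−1}, a_2, …, a_{n−1}}, and μ(π) is the minimum, over all factorizations ω = b_0 s_0^{i_1} b_1 s_0^{i_2} b_2 ⋯ s_0^{i_{k+1}} b_{k+1} of π as a product of the generators s_0, …, s_{n−1} in which each b_u is a (possibly empty) word in s_1, …, s_{n−1} only, of the quantity β(ω) + n(ω), where n(ω) is the total number of letters s_i with i ≠ 0 in ω and β(ω) = Σ_{u=1}^{k+1} (i_u ⊘ 2). -/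

import Mathlib

open Multiplicative

namespace ACP

/-- The action of `Sₙ` on color vectors by permuting coordinates. -/
def permAct (r n : ℕ) : Equiv.Perm (Fin n) →* MulAut (Fin n → Multiplicative (ZMod r)) where
  toFun τ :=
    { toFun := fun z => z ∘ τ.symm
      invFun := fun z => z ∘ τ
      left_inv := fun z => by ext i; simp
      right_inv := fun z => by ext i; simp
      map_mul' := fun z w => rfl }
  map_one' := by ext z i; rfl
  map_mul' a b := by ext z i; rfl

/-- The group of colored permutations `G_{r,n} = ℤ_r ≀ Sₙ`. -/
abbrev G (r n : ℕ) : Type := (Fin n → Multiplicative (ZMod r)) ⋊[permAct r n] Equiv.Perm (Fin n)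

/-- The Coxeter-like generators: `gen r n 0 = s₀` colors the digit 1 by one color,
`gen r n i = sᵢ` (for `1 ≤ i ≤ n-1`) is the adjacent transposition `(i, i+1)`. -/
def gen (r n : ℕ) (i : ℕ) : G r n :=
  if h : 0 < i ∧ i < n then
    ⟨1, Equiv.swap ⟨i - 1, by omega⟩ ⟨i, h.2⟩⟩
  else
    ⟨fun j => if (j : ℕ) = 0 then ofAdd (1 : ZMod r) else 1, 1⟩

def zmod2ToUnits : Multiplicative (ZMod 2) →* ℤˣ where
  toFun z := (-1) ^ (toAdd z).val
  map_one' := rfl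
  map_mul' := by decide

def csumHom (r n : ℕ) (hr : 2 ∣ r) :
    (Fin n → Multiplicative (ZMod r)) →* Multiplicative (ZMod 2) where
  toFun z := ofAdd (∑ i, ZMod.castHom hr (ZMod 2) (toAdd (z i)))
  map_one' := by simp
  map_mul' z w := by
    have h : ∀ i, ZMod.castHom hr (ZMod 2) (toAdd ((z * w) i))
        = ZMod.castHom hr (ZMod 2) (toAdd (z i)) + ZMod.castHom hr (ZMod 2) (toAdd (w i)) :=
      fun i => map_add _ _ _
    simp only [h, Finset.sum_add_distrib, ofAdd_add]

/-- The sign character of `G_{r,n}` (for even `r`): sends every Coxeter-like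
generator `sᵢ` to `-1`. -/
noncomputable def sgn (r n : ℕ) (hr : 2 ∣ r) : G r n →* ℤˣ :=
  SemidirectProduct.lift (zmod2ToUnits.comp (csumHom r n hr)) Equiv.Perm.sign
    (by
      intro g
      refine MonoidHom.ext fun z => ?_
      have h1 : ∀ a x : ℤˣ, a * x * a⁻¹ = x := fun a x => by
        rw [mul_comm a x, mul_inv_cancel_right]
      simp only [MonoidHom.comp_apply, MulEquiv.coe_toMonoidHom, MulAut.conj_apply, h1]
      congr 1
      show csumHom r n hr (z ∘ g.symm) = csumHom r n hr z
      unfold csumHom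
      simp only [MonoidHom.coe_mk, OneHom.coe_mk]
      congr 1
      exact Equiv.sum_comp g.symm fun j => ZMod.castHom hr (ZMod 2) (toAdd (z j)))

/-- The group of alternating colored permutations `A_{r,n}`: the kernel of the sign
character of `G_{r,n}`. -/
noncomputable def Arn (r n : ℕ) (hr : 2 ∣ r) : Subgroup (G r n) := (sgn r n hr).ker

/-- The generators of `A_{r,n}`: `agen r n 0 = a₀ = s₀²` and
`agen r n i = aᵢ = s₀^{r/2} sᵢ` for `i ≥ 1`. -/
def agen (r n : ℕ) (i : ℕ) : G r n :=
  if i = 0 then gen r n 0 ^ 2 else gen r n 0 ^ (r / 2) * gen r n i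

/-- The generating set `𝒜 = {a₀, a₁, a₁⁻¹, a₂, …, a_{n-1}}` of `A_{r,n}`. -/
def Aset (r n : ℕ) : Set (G r n) :=
  {x | ∃ i ≤ n - 1, x = agen r n i} ∪ {(agen r n 1)⁻¹}

/-- The Coxeter-like generating set `{s₀, …, s_{n-1}}` of `G_{r,n}`. -/
def Sset (r n : ℕ) : Set (G r n) := {x | ∃ i < n, x = gen r n i}

/-- Word length of `g` with respect to a generating set `B`. -/
noncomputable def wordLength {H : Type*} [Group H] (B : Set H) (g : H) : ℕ :=
  sInf {k | ∃ w : List H, (∀ x ∈ w, x ∈ B) ∧ w.prod = g ∧ w.length = k}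

/-- The element `a₁² ∈ A_{r,n}`. -/
noncomputable def a1sq (r n : ℕ) (hr : 2 ∣ r) : ↥(Arn r n hr) :=
  ⟨agen r n 1 ^ 2, by rw [Arn, MonoidHom.mem_ker, map_pow]; exact Int.units_sq _⟩

/-- The operator `a ⊘ 2` : the residue mod `r/2` of `a/2` (`a` even) or of
`(a + r/2)/2` (`a` odd). -/
def oslash (r a : ℕ) : ℕ :=
  if a % 2 = 0 then (a / 2) % (r / 2) else ((a + r / 2) / 2) % (r / 2)

/-- `z_i(π)`, the color of digit `i+1` of `π`, as a natural number in `{0, …, r-1}`. -/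
def zval (r n : ℕ) (π : G r n) (i : Fin n) : ℕ := (toAdd (π.left i)).val

/-- `csum(π) = Σ z_i(π)`. -/
def csum (r n : ℕ) (π : G r n) : ℕ := ∑ i, zval r n π i

/-- Rank of the colored letter `b^{[c]}` (with `1 ≤ b ≤ n`, `0 ≤ c ≤ r-1`) in the
length order `n^{[r-1]} < ⋯ < 1^{[1]} < 1 < 2 < ⋯ < n`. -/
def rank (r n : ℕ) (b c : ℕ) : ℕ :=
  if c = 0 then n * (r - 1) + (b - 1) else (n - b) * (r - 1) + (r - 1 - c)

/-- Rank (in the length order) of the letter in position `i` of the window of `π`. -/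
def colRank (r n : ℕ) (π : G r n) (i : Fin n) : ℕ :=
  rank r n ((π.right i : ℕ) + 1) (zval r n π (π.right i))

/-- The inversion number of `π ∈ G_{r,n}` with respect to the length order. -/
noncomputable def inv (r n : ℕ) (π : G r n) : ℕ :=
  Nat.card {p : Fin n × Fin n // p.1 < p.2 ∧ colRank r n π p.2 < colRank r n π p.1}

/-- The ordinary inversion number of a permutation. -/
noncomputable def invPerm (n : ℕ) (τ : Equiv.Perm (Fin n)) : ℕ :=
  Nat.card {p : Fin n × Fin n // p.1 < p.2 ∧ τ p.2 < τ p.1}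

/-- The covering map `p : A_{r,n} → G_{r/2,n}`, `p(z, τ) = ((zᵢ ⊘ 2)ᵢ, τ)`. -/
def pmap (r n : ℕ) (π : G r n) : G (r / 2) n :=
  ⟨fun i => ofAdd ((oslash r (zval r n π i) : ZMod (r / 2))), π.right⟩

/-- The section `s : G_{r/2,n} → A_{r,n}`: doubles all colors (mod `r`), adding `r/2`
to the color of the digit `1` when `inv(|π|)` is odd. -/
noncomputable def smap (r n : ℕ) (π : G (r / 2) n) : G r n :=
  ⟨fun d => ofAdd
      (((2 * zval (r / 2) n π d +
        if (d : ℕ) = 0 ∧ invPerm n π.right % 2 = 1 then r / 2 else 0 : ℕ) : ZMod r)),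
   π.right⟩

/-- `c(π) = Σ_{i : z_i(π) ≠ 0} (i - 1)` (digits are `1`-based). -/
def cstat (r n : ℕ) (π : G r n) : ℕ :=
  ∑ i : Fin n, if zval r n π i ≠ 0 then (i : ℕ) else 0

/-- The number of absolute transparent inversions of `π`. -/
noncomputable def tinv (r n : ℕ) (π : G r n) : ℕ :=
  Nat.card {p : Fin n × Fin n //
    zval r n π p.1 = r / 2 ∧ p.2 < p.1 ∧ π.right⁻¹ p.1 < π.right⁻¹ p.2}

/-- The (digit-indexed) Lehmer code `l_i = #{j : j > i, τ⁻¹(i) > τ⁻¹(j)}`. -/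
noncomputable def lehmer (n : ℕ) (τ : Equiv.Perm (Fin n)) (i : Fin n) : ℕ :=
  Nat.card {j : Fin n // i < j ∧ τ⁻¹ j < τ⁻¹ i}


/-- `μ(π)`: the minimum of `β(ω) + n(ω)` over all factorizations
`ω = b₀ s₀^{i₁} b₁ ⋯ s₀^{i_{k+1}} b_{k+1}` of `π`, where each `b_u` is a word in
`s₁, …, s_{n-1}` only, `n(ω)` is the number of letters `sᵢ` with `i ≠ 0`, and
`β(ω) = Σ_u (i_u ⊘ 2)`. -/
noncomputable def mu (r n : ℕ) (π : G r n) : ℕ :=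
  sInf {m | ∃ (b₀ : List ℕ) (L : List (ℕ × List ℕ)),
    (∀ x ∈ b₀, 1 ≤ x ∧ x ≤ n - 1) ∧
    (∀ q ∈ L, ∀ x ∈ q.2, 1 ≤ x ∧ x ≤ n - 1) ∧
    π = (b₀.map (gen r n)).prod *
        (L.map (fun q => gen r n 0 ^ q.1 * (q.2.map (gen r n)).prod)).prod ∧
    m = (L.map (fun q => oslash r q.1)).sum +
        (b₀.length + (L.map (fun q => q.2.length)).sum)}

/-- The flag-inversion number on `A_{r,n}`:
`finv_A(π) = (r/2)·inv(|π|) + Σᵢ (cᵢ(π) ⊘ 2)` where `cᵢ(π) = r - zᵢ(π⁻¹) (mod r)`. -/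
noncomputable def finvA (r n : ℕ) (π : G r n) : ℕ :=
  (r / 2) * invPerm n π.right + ∑ i, oslash r ((r - zval r n π⁻¹ i) % r)

/-- The number of (colored) right-to-left minima of `π` whose color is not in `{0, r/2}`. -/
noncomputable def rtlMinA (r n : ℕ) (π : G r n) : ℕ :=
  Nat.card {i : Fin n // (∀ j : Fin n, i < j → π.right i < π.right j) ∧
    zval r n π (π.right i) ≠ 0 ∧ zval r n π (π.right i) ≠ r / 2}

/-- The defining relators of the Coxeter-like presentation of `A_{r,n}` on generators
`x₀, …, x_{n-1}`. -/
def rels (r n : ℕ) : Set (FreeGroup (Fin n)) :=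
  {w | ∃ i : Fin n, (i : ℕ) = 0 ∧ w = FreeGroup.of i ^ (r / 2)} ∪
  {w | ∃ i : Fin n, (i : ℕ) = 1 ∧ w = FreeGroup.of i ^ 4} ∪
  {w | ∃ i : Fin n, 2 ≤ (i : ℕ) ∧ w = FreeGroup.of i ^ 2} ∪
  {w | ∃ i j : Fin n, (i : ℕ) ≠ 1 ∧ (j : ℕ) ≠ 1 ∧ (i : ℕ) + 1 < (j : ℕ) ∧
    w = FreeGroup.of i * FreeGroup.of j * (FreeGroup.of i)⁻¹ * (FreeGroup.of j)⁻¹} ∪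
  {w | ∃ i j : Fin n, 1 ≤ (i : ℕ) ∧ (j : ℕ) = (i : ℕ) + 1 ∧
    w = (FreeGroup.of i * FreeGroup.of j) ^ 3} ∪
  {w | ∃ i j : Fin n, (i : ℕ) = 0 ∧ (j : ℕ) = 1 ∧
    w = (FreeGroup.of i * FreeGroup.of j) ^ (2 * r)} ∪
  {w | ∃ i j : Fin n, (i : ℕ) = 0 ∧ (j : ℕ) = 1 ∧
    w = (FreeGroup.of i * (FreeGroup.of j)⁻¹) ^ (2 * r)} ∪
  {w | ∃ i j : Fin n, (i : ℕ) = 0 ∧ (j : ℕ) = 1 ∧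
    w = FreeGroup.of i * FreeGroup.of j ^ 2 * (FreeGroup.of i)⁻¹ * (FreeGroup.of j ^ 2)⁻¹} ∪
  {w | ∃ i j : Fin n, (i : ℕ) = 1 ∧ 2 < (j : ℕ) ∧
    w = FreeGroup.of i * FreeGroup.of j * FreeGroup.of i * (FreeGroup.of j)⁻¹}

section Aux
variable (r n : ℕ)

def delta (r n : ℕ) : Fin n → Multiplicative (ZMod r) :=
  fun j => if (j : ℕ) = 0 then ofAdd (1 : ZMod r) else 1

lemma gen_zero_eq : gen r n 0 = SemidirectProduct.inl (delta r n) := by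
  unfold gen
  rw [dif_neg (by omega)]
  rfl

lemma gen_pos_eq (i : ℕ) (h1 : 0 < i) (h2 : i < n) :
    gen r n i = SemidirectProduct.inr (Equiv.swap ⟨i - 1, by omega⟩ ⟨i, h2⟩) := by
  unfold gen
  rw [dif_pos ⟨h1, h2⟩]
  rfl

lemma delta_pow (k : ℕ) :
    (delta r n) ^ k = fun j : Fin n => if (j : ℕ) = 0 then ofAdd ((k : ZMod r)) else 1 := by
  funext j
  simp only [Pi.pow_apply, delta]
  split
  · rw [show ((k : ZMod r)) = k • (1 : ZMod r) by simp, ofAdd_nsmul]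
  · exact one_pow k

lemma gen0_pow (k : ℕ) :
    gen r n 0 ^ k = SemidirectProduct.inl
      (fun j : Fin n => if (j : ℕ) = 0 then ofAdd ((k : ZMod r)) else 1) := by
  rw [gen_zero_eq, ← map_pow, delta_pow]

lemma gen0_pow_congr {a b : ℕ} (h : a ≡ b [MOD r]) : gen r n 0 ^ a = gen r n 0 ^ b := by
  rw [gen0_pow, gen0_pow]
  have : ((a : ZMod r)) = (b : ZMod r) := (ZMod.natCast_eq_natCast_iff _ _ _).mpr h
  rw [this]

lemma gen0_pow_r : gen r n 0 ^ r = 1 := by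
  rw [gen0_pow]
  have : (fun j : Fin n => if (j : ℕ) = 0 then ofAdd ((r : ZMod r)) else 1)
      = (1 : Fin n → Multiplicative (ZMod r)) := by
    funext j
    simp [ZMod.natCast_self]
  rw [this, map_one]

lemma gen_sq (i : ℕ) (h1 : 0 < i) (h2 : i < n) : gen r n i * gen r n i = 1 := by
  rw [gen_pos_eq r n i h1 h2, ← map_mul, Equiv.swap_mul_self, map_one]

lemma inl_inr_comm {z : Fin n → Multiplicative (ZMod r)} {g : Equiv.Perm (Fin n)}
    (hz : permAct r n g z = z) :
    Commute (SemidirectProduct.inl z : G r n) (SemidirectProduct.inr g) := by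
  have h := SemidirectProduct.inl_aut (φ := permAct r n) g z
  rw [hz] at h
  unfold Commute SemiconjBy
  nth_rewrite 1 [h]
  simp only [map_inv, mul_assoc, inv_mul_cancel, mul_one]

lemma permAct_swap_indicator (hn : 0 < n) (g : Equiv.Perm (Fin n))
    (hg : g ⟨0, hn⟩ = ⟨0, hn⟩) (c : Multiplicative (ZMod r)) :
    permAct r n g (fun j : Fin n => if (j : ℕ) = 0 then c else 1)
      = fun j : Fin n => if (j : ℕ) = 0 then c else 1 := by
  funext j
  show (if ((g.symm j : Fin n) : ℕ) = 0 then c else 1) = _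
  by_cases hj : (j : ℕ) = 0
  · have hj' : j = ⟨0, hn⟩ := Fin.ext hj
    have : g.symm j = ⟨0, hn⟩ := by rw [hj', Equiv.symm_apply_eq, hg]
    rw [this]
    simp [hj]
  · have : g.symm j ≠ ⟨0, hn⟩ := by
      intro h
      apply hj
      have := congrArg g h
      rw [Equiv.apply_symm_apply, hg] at this
      rw [this]
    have hne : ((g.symm j : Fin n) : ℕ) ≠ 0 := fun h => this (Fin.ext h)
    rw [if_neg hne, if_neg hj]

lemma gen_comm (i : ℕ) (hi : 2 ≤ i) (h : i < n) :
    Commute (gen r n 0) (gen r n i) := by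
  have hn : 0 < n := by omega
  rw [gen_zero_eq, gen_pos_eq r n i (by omega) h]
  apply inl_inr_comm
  apply permAct_swap_indicator r n hn
  apply Equiv.swap_apply_of_ne_of_ne
  · exact fun hh => by have := congrArg Fin.val hh; simp at this; omega
  · exact fun hh => by have := congrArg Fin.val hh; simp at this; omega


lemma gen0_half_sq (hr : r % 2 = 0) : gen r n 0 ^ (r / 2) * gen r n 0 ^ (r / 2) = 1 := by
  rw [← pow_add, show r / 2 + r / 2 = r by omega, gen0_pow_r]

lemma gen_inv_self (i : ℕ) (h1 : 0 < i) (h2 : i < n) : (gen r n i)⁻¹ = gen r n i :=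
  inv_eq_of_mul_eq_one_right (gen_sq r n i h1 h2)

lemma gen0_half_inv (hr : r % 2 = 0) : (gen r n 0 ^ (r / 2))⁻¹ = gen r n 0 ^ (r / 2) :=
  inv_eq_of_mul_eq_one_right (gen0_half_sq r n hr)

lemma agen_zero : agen r n 0 = gen r n 0 ^ 2 := by rw [agen, if_pos rfl]

lemma agen_pos (i : ℕ) (hi : i ≠ 0) : agen r n i = gen r n 0 ^ (r / 2) * gen r n i := by
  rw [agen, if_neg hi]

lemma agen1_inv (hr : r % 2 = 0) (hn : 1 < n) :
    (agen r n 1)⁻¹ = gen r n 1 * gen r n 0 ^ (r / 2) := by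
  rw [agen_pos r n 1 one_ne_zero, mul_inv_rev, gen_inv_self r n 1 one_pos hn,
    gen0_half_inv r n hr]

/-- The translated single generator. -/
def letterTr (r n : ℕ) (σ : Bool) (x : ℕ) : G r n :=
  if σ then agen r n x else if x = 1 then (agen r n 1)⁻¹ else agen r n x

lemma letterTr_mem (σ : Bool) (x : ℕ) (h1 : 1 ≤ x) (h2 : x ≤ n - 1) :
    letterTr r n σ x ∈ Aset r n := by
  unfold letterTr
  by_cases hσ : σ
  · rw [if_pos hσ]; exact Or.inl ⟨x, h2, rfl⟩
  · rw [if_neg hσ]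
    by_cases hx : x = 1
    · rw [if_pos hx]; exact Or.inr rfl
    · rw [if_neg hx]; exact Or.inl ⟨x, h2, rfl⟩

lemma agen0_mem : agen r n 0 ∈ Aset r n := Or.inl ⟨0, Nat.zero_le _, rfl⟩

lemma pend_letter (hr : r % 2 = 0) (hn : 2 ≤ n) (σ : Bool) (x : ℕ)
    (h1 : 1 ≤ x) (h2 : x < n) :
    gen r n 0 ^ (cond σ (r / 2) 0) * gen r n x
      = letterTr r n σ x * gen r n 0 ^ (cond (!σ) (r / 2) 0) := by
  cases σ with
  | true =>
    show gen r n 0 ^ (r / 2) * gen r n x = letterTr r n true x * gen r n 0 ^ 0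
    rw [pow_zero, mul_one, letterTr, if_pos rfl, agen_pos r n x (by omega)]
  | false =>
    show gen r n 0 ^ 0 * gen r n x = letterTr r n false x * gen r n 0 ^ (r / 2)
    rw [pow_zero, one_mul, letterTr, if_neg (by simp)]
    by_cases hx : x = 1
    · rw [if_pos hx, agen1_inv r n hr (by omega), hx, mul_assoc,
        gen0_half_sq r n hr, mul_one]
    · rw [if_neg hx, agen_pos r n x (by omega)]
      have hc : Commute (gen r n 0 ^ (r / 2)) (gen r n x) :=
        (gen_comm r n x (by omega) h2).pow_left _
      rw [mul_assoc, ← hc.eq, ← mul_assoc, gen0_half_sq r n hr, one_mul]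

lemma pend_pow (hr4 : r % 4 = 2) (σ : Bool) (i : ℕ) :
    gen r n 0 ^ (cond σ (r / 2) 0) * gen r n 0 ^ i
      = agen r n 0 ^ (oslash r i)
        * gen r n 0 ^ (cond (if i % 2 = 0 then σ else !σ) (r / 2) 0) := by
  rw [agen_zero, ← pow_mul, ← pow_add, ← pow_add]
  apply gen0_pow_congr
  have hmul : ∀ x : ℕ, 2 * (x % (r / 2)) ≡ 2 * x [MOD r] := by
    intro x
    have h := (Nat.mod_modEq x (r / 2)).mul_left' (c := 2)
    rwa [show 2 * (r / 2) = r by omega] at h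
  unfold oslash
  by_cases hi : i % 2 = 0
  · rw [if_pos hi, if_pos hi]
    have h := hmul (i / 2)
    rw [show 2 * (i / 2) = i by omega] at h
    calc cond σ (r / 2) 0 + i ≡ cond σ (r / 2) 0 + 2 * (i / 2 % (r / 2)) [MOD r] :=
          (h.symm.add_left _)
      _ = 2 * (i / 2 % (r / 2)) + cond σ (r / 2) 0 := by ring
  · rw [if_neg hi, if_neg hi]
    have h := hmul ((i + r / 2) / 2)
    rw [show 2 * ((i + r / 2) / 2) = i + r / 2 by omega] at h
    have h' : 2 * ((i + r / 2) / 2 % (r / 2)) + cond (!σ) (r / 2) 0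
        ≡ (i + r / 2) + cond (!σ) (r / 2) 0 [MOD r] := h.add_right _
    refine (Nat.ModEq.trans ?_ h'.symm)
    cases σ with
    | true =>
      show (r / 2 + i) % r = (i + r / 2 + 0) % r
      congr 1
      omega
    | false =>
      show (0 + i) % r = (i + r / 2 + r / 2) % r
      rw [show i + r / 2 + r / 2 = i + r by omega, Nat.add_mod_right, Nat.zero_add]


lemma sgn_gen0 (hdvd : 2 ∣ r) (hn : 0 < n) : sgn r n hdvd (gen r n 0) = -1 := by
  rw [gen_zero_eq, sgn, SemidirectProduct.lift_inl]
  have hsum : (∑ i : Fin n, ZMod.castHom hdvd (ZMod 2) (toAdd (delta r n i))) = 1 := by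
    calc (∑ i : Fin n, ZMod.castHom hdvd (ZMod 2) (toAdd (delta r n i)))
        = ∑ i : Fin n, (if i = (⟨0, hn⟩ : Fin n) then (1 : ZMod 2) else 0) := by
          refine Finset.sum_congr rfl fun i _ => ?_
          unfold delta
          by_cases hi : (i : ℕ) = 0
          · rw [if_pos hi, if_pos (Fin.ext hi), toAdd_ofAdd, map_one]
          · rw [if_neg hi, if_neg (fun h => hi (by rw [h])), toAdd_one, map_zero]
      _ = 1 := by rw [Finset.sum_ite_eq']; simp
  show zmod2ToUnits (ofAdd (∑ i : Fin n, ZMod.castHom hdvd (ZMod 2) (toAdd (delta r n i)))) = -1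
  rw [hsum]
  decide

lemma sgn_gen_pos (hdvd : 2 ∣ r) (i : ℕ) (h1 : 0 < i) (h2 : i < n) :
    sgn r n hdvd (gen r n i) = -1 := by
  rw [gen_pos_eq r n i h1 h2, sgn, SemidirectProduct.lift_inr]
  exact Equiv.Perm.sign_swap
    (by intro h; have := congrArg Fin.val h; simp at this; omega)

lemma sgn_half (hdvd : 2 ∣ r) (hr4 : r % 4 = 2) (hn : 0 < n) :
    sgn r n hdvd (gen r n 0 ^ (r / 2)) = -1 := by
  rw [map_pow, sgn_gen0 r n hdvd hn]
  exact Odd.neg_one_pow (Nat.odd_iff.mpr (by omega))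

lemma sgn_Aset (hdvd : 2 ∣ r) (hr4 : r % 4 = 2) (hn : 2 ≤ n) {x : G r n}
    (hx : x ∈ Aset r n) : sgn r n hdvd x = 1 := by
  have hag : ∀ i, i ≤ n - 1 → sgn r n hdvd (agen r n i) = 1 := by
    intro i hi
    by_cases h0 : i = 0
    · rw [h0, agen_zero, map_pow, sgn_gen0 r n hdvd (by omega)]
      decide
    · rw [agen_pos r n i h0, map_mul, sgn_half r n hdvd hr4 (by omega),
        sgn_gen_pos r n hdvd i (by omega) (by omega)]
      decide
  rcases hx with ⟨i, hi, rfl⟩ | hx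
  · exact hag i hi
  · rw [Set.mem_singleton_iff] at hx
    rw [hx, map_inv, hag 1 (by omega), inv_one]

private lemma chain2 {H : Type*} [Group H] {p x l p1 R W p2 : H}
    (h1 : p * x = l * p1) (h2 : p1 * R = W * p2) :
    p * (x * R) = l * W * p2 := by
  rw [← mul_assoc, h1, mul_assoc, h2, ← mul_assoc]

private lemma chain3 {H : Type*} [Group H] {p i a p1 B W1 p2 R W2 p3 : H}
    (h1 : p * i = a * p1) (h2 : p1 * B = W1 * p2) (h3 : p2 * R = W2 * p3) :
    p * (i * B * R) = a * W1 * W2 * p3 := by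
  have h : p * (i * B * R) = (p * i) * (B * R) := by group
  rw [h, h1, mul_assoc, ← mul_assoc p1, h2, mul_assoc W1, h3]
  group

lemma block_tr (hr4 : r % 4 = 2) (hn : 2 ≤ n) (b : List ℕ)
    (hb : ∀ x ∈ b, 1 ≤ x ∧ x ≤ n - 1) (σ : Bool) :
    ∃ (W : List (G r n)) (σ' : Bool), (∀ y ∈ W, y ∈ Aset r n) ∧ W.length = b.length ∧
      gen r n 0 ^ (cond σ (r / 2) 0) * (b.map (gen r n)).prod
        = W.prod * gen r n 0 ^ (cond σ' (r / 2) 0) := by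
  induction b generalizing σ with
  | nil => exact ⟨[], σ, by simp, by simp, by simp⟩
  | cons x b ih =>
    obtain ⟨W, σ', hW, hlen, hprod⟩ := ih (fun y hy => hb y (List.mem_cons_of_mem _ hy)) (!σ)
    obtain ⟨hx1, hx2⟩ := hb x (List.mem_cons_self)
    refine ⟨letterTr r n σ x :: W, σ', ?_, ?_, ?_⟩
    · intro y hy
      rcases List.mem_cons.mp hy with h | h
      · rw [h]; exact letterTr_mem r n σ x hx1 hx2
      · exact hW y h
    · simp [hlen]
    · rw [List.map_cons, List.prod_cons, List.prod_cons]
      exact chain2 (pend_letter r n (by omega) hn σ x hx1 (by omega)) hprod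

lemma list_tr (hr4 : r % 4 = 2) (hn : 2 ≤ n) (L : List (ℕ × List ℕ))
    (hL : ∀ q ∈ L, ∀ x ∈ q.2, 1 ≤ x ∧ x ≤ n - 1) (σ : Bool) :
    ∃ (W : List (G r n)) (σ' : Bool), (∀ y ∈ W, y ∈ Aset r n) ∧
      W.length = (L.map fun q => oslash r q.1).sum + (L.map fun q => q.2.length).sum ∧
      gen r n 0 ^ (cond σ (r / 2) 0)
          * (L.map fun q => gen r n 0 ^ q.1 * ((q.2.map (gen r n)).prod)).prod
        = W.prod * gen r n 0 ^ (cond σ' (r / 2) 0) := by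
  induction L generalizing σ with
  | nil => exact ⟨[], σ, by simp, by simp, by simp⟩
  | cons q L ih =>
    obtain ⟨i, b⟩ := q
    obtain ⟨W₁, σ₁, hW₁, hlen₁, hprod₁⟩ :=
      block_tr r n hr4 hn b (fun x hx => hL (i, b) (List.mem_cons_self) x hx)
        (if i % 2 = 0 then σ else !σ)
    obtain ⟨W₂, σ₂, hW₂, hlen₂, hprod₂⟩ :=
      ih (fun q hq => hL q (List.mem_cons_of_mem _ hq)) σ₁
    refine ⟨List.replicate (oslash r i) (agen r n 0) ++ W₁ ++ W₂, σ₂, ?_, ?_, ?_⟩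
    · intro y hy
      rcases List.mem_append.mp hy with h | h
      · rcases List.mem_append.mp h with h' | h'
        · rw [List.eq_of_mem_replicate h']; exact agen0_mem r n
        · exact hW₁ y h'
      · exact hW₂ y h
    · simp only [List.length_append, List.length_replicate, hlen₁, hlen₂,
        List.map_cons, List.sum_cons]
      omega
    · simp only [List.map_cons, List.prod_cons, List.prod_append, List.prod_replicate]
      exact chain3 (pend_pow r n hr4 σ i) hprod₁ hprod₂

lemma oslash_half (hr4 : r % 4 = 2) : oslash r (r / 2) = 0 := by
  unfold oslash
  rw [if_neg (by omega), show (r / 2 + r / 2) / 2 = r / 2 by omega, Nat.mod_self]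

lemma oslash_zero : oslash r 0 = 0 := by
  unfold oslash
  simp

lemma oslash_two_le_one : oslash r 2 ≤ 1 := by
  unfold oslash
  rw [if_pos rfl]
  exact le_trans (Nat.mod_le _ _) (by norm_num)

lemma len_to_mu (hr4 : r % 4 = 2) (hn : 2 ≤ n) (w : List (G r n))
    (hw : ∀ x ∈ w, x ∈ Aset r n) :
    ∃ L : List (ℕ × List ℕ), (∀ q ∈ L, ∀ x ∈ q.2, 1 ≤ x ∧ x ≤ n - 1) ∧
      (L.map fun q => gen r n 0 ^ q.1 * ((q.2.map (gen r n)).prod)).prod = w.prod ∧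
      (L.map fun q => oslash r q.1).sum + (L.map fun q => q.2.length).sum ≤ w.length := by
  induction w with
  | nil => exact ⟨[], by simp, by simp, by simp⟩
  | cons x w ih =>
    obtain ⟨L, hL, hLp, hLc⟩ := ih (fun y hy => hw y (List.mem_cons_of_mem _ hy))
    have hx := hw x (List.mem_cons_self)
    rcases hx with ⟨i, hi, rfl⟩ | hx
    · by_cases h0 : i = 0
      · subst h0
        refine ⟨(2, []) :: L, ?_, ?_, ?_⟩
        · intro q hq
          rcases List.mem_cons.mp hq with h | h
          · rw [h]; intro y hy; simp at hy
          · exact hL q h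
        · simp only [List.map_cons, List.prod_cons, List.map_nil, List.prod_nil,
            mul_one, hLp, agen_zero]
        · simp only [List.map_cons, List.sum_cons, List.length_cons, List.length_nil]
          have := oslash_two_le_one r
          omega
      · refine ⟨(r / 2, [i]) :: L, ?_, ?_, ?_⟩
        · intro q hq
          rcases List.mem_cons.mp hq with h | h
          · rw [h]; intro y hy; simp at hy; subst hy; exact ⟨by omega, hi⟩
          · exact hL q h
        · simp only [List.map_cons, List.prod_cons, List.map_nil, List.prod_nil,
            mul_one, hLp]
          rw [agen_pos r n i h0]
        · simp only [List.map_cons, List.sum_cons, List.length_cons, List.length_nil,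
            oslash_half r hr4]
          omega
    · rw [Set.mem_singleton_iff] at hx
      subst hx
      refine ⟨(0, [1]) :: (r / 2, []) :: L, ?_, ?_, ?_⟩
      · intro q hq
        rcases List.mem_cons.mp hq with h | h
        · rw [h]; intro y hy; simp at hy; subst hy; exact ⟨le_refl 1, by omega⟩
        · rcases List.mem_cons.mp h with h' | h'
          · rw [h']; intro y hy; simp at hy
          · exact hL q h'
      · simp only [List.map_cons, List.prod_cons, List.map_nil, List.prod_nil,
          mul_one, pow_zero, one_mul, hLp]
        rw [← mul_assoc, ← agen1_inv r n (by omega) (by omega)]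
      · simp only [List.map_cons, List.sum_cons, List.length_cons, List.length_nil,
          oslash_half r hr4, oslash_zero r]
        omega

lemma mu_to_len (hr4 : r % 4 = 2) (hn : 2 ≤ n) (hdvd : 2 ∣ r) (π : G r n)
    (hπ : sgn r n hdvd π = 1) (b₀ : List ℕ) (L : List (ℕ × List ℕ))
    (hb : ∀ x ∈ b₀, 1 ≤ x ∧ x ≤ n - 1) (hL : ∀ q ∈ L, ∀ x ∈ q.2, 1 ≤ x ∧ x ≤ n - 1)
    (heq : π = (b₀.map (gen r n)).prod *
        (L.map fun q => gen r n 0 ^ q.1 * ((q.2.map (gen r n)).prod)).prod) :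
    ∃ W : List (G r n), (∀ y ∈ W, y ∈ Aset r n) ∧ W.prod = π ∧
      W.length = (L.map fun q => oslash r q.1).sum +
        (b₀.length + (L.map fun q => q.2.length).sum) := by
  obtain ⟨W₀, σ₁, hW₀, hlen₀, hp₀⟩ := block_tr r n hr4 hn b₀ hb false
  obtain ⟨W₁, σ₂, hW₁, hlen₁, hp₁⟩ := list_tr r n hr4 hn L hL σ₁
  have hπeq : π = (W₀ ++ W₁).prod * gen r n 0 ^ (cond σ₂ (r / 2) 0) := by
    rw [List.prod_append, heq]
    have h0 : (b₀.map (gen r n)).prod = W₀.prod * gen r n 0 ^ (cond σ₁ (r / 2) 0) := by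
      rw [← hp₀]; simp
    rw [h0, mul_assoc, hp₁, ← mul_assoc]
  have hAll : ∀ y ∈ W₀ ++ W₁, y ∈ Aset r n := by
    intro y hy
    rcases List.mem_append.mp hy with h | h
    exacts [hW₀ y h, hW₁ y h]
  have hsgnW : sgn r n hdvd (W₀ ++ W₁).prod = 1 := by
    rw [map_list_prod]
    apply List.prod_eq_one
    intro u hu
    rw [List.mem_map] at hu
    obtain ⟨y, hy, rfl⟩ := hu
    exact sgn_Aset r n hdvd hr4 hn (hAll y hy)
  have hσ₂ : σ₂ = false := by
    by_contra hc
    have hσt : σ₂ = true := by revert hc; cases σ₂ <;> simp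
    rw [hσt] at hπeq
    have hcon := congrArg (sgn r n hdvd) hπeq
    rw [hπ, map_mul, hsgnW, one_mul] at hcon
    rw [show cond true (r / 2) 0 = r / 2 from rfl, sgn_half r n hdvd hr4 (by omega)] at hcon
    exact absurd hcon (by decide)
  refine ⟨W₀ ++ W₁, hAll, ?_, ?_⟩
  · rw [hπeq, hσ₂]; simp
  · rw [List.length_append, hlen₀, hlen₁]; omega

lemma sInf_eq_sInf {S T : Set ℕ} (h1 : ∀ a ∈ S, ∃ b ∈ T, b ≤ a)
    (h2 : ∀ b ∈ T, ∃ a ∈ S, a ≤ b) : sInf S = sInf T := by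
  rcases Set.eq_empty_or_nonempty S with hS | hS
  · have hT : T = ∅ := by
      rw [Set.eq_empty_iff_forall_notMem]
      intro b hb
      obtain ⟨a, ha, _⟩ := h2 b hb
      rw [hS] at ha
      exact ha
    rw [hS, hT]
  · have hT : T.Nonempty := by
      obtain ⟨a, ha⟩ := hS
      obtain ⟨b, hb, _⟩ := h1 a ha
      exact ⟨b, hb⟩
    apply le_antisymm
    · obtain ⟨a, ha, hle⟩ := h2 _ (Nat.sInf_mem hT)
      exact le_trans (Nat.sInf_le ha) hle
    · obtain ⟨b, hb, hle⟩ := h1 _ (Nat.sInf_mem hS)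
      exact le_trans (Nat.sInf_le hb) hle

end Aux

end ACP

/-- `ℓ_𝒜(π) = μ(π)` for every `π ∈ A_{r,n}`. -/
theorem length_eq_mu (r n : ℕ) (hn : 2 ≤ n) (hr : r % 4 = 2)
    (π : ACP.G r n) (hπ : π ∈ ACP.Arn r n (by omega)) :
    ACP.wordLength (ACP.Aset r n) π = ACP.mu r n π := by
  have hdvd : 2 ∣ r := by omega
  have hπ' : ACP.sgn r n hdvd π = 1 := by
    have h2 := hπ
    rw [ACP.Arn, MonoidHom.mem_ker] at h2
    exact h2
  rw [ACP.wordLength, ACP.mu]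
  apply ACP.sInf_eq_sInf
  · rintro k ⟨w, hw, hwp, hwl⟩
    obtain ⟨L, hL, hLp, hLc⟩ := ACP.len_to_mu r n hr hn w hw
    refine ⟨(L.map fun q => ACP.oslash r q.1).sum +
        (([] : List ℕ).length + (L.map fun q => q.2.length).sum),
      ⟨[], L, by simp, hL, ?_, rfl⟩, ?_⟩
    · simp only [List.map_nil, List.prod_nil, one_mul]
      rw [hwp] at hLp
      exact hLp.symm
    · simp only [List.length_nil, Nat.zero_add]
      rw [← hwl]
      exact hLc
  · rintro m ⟨b₀, L, hb, hL, heq, hm⟩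
    obtain ⟨W, hW, hWp, hWl⟩ := ACP.mu_to_len r n hr hn hdvd π hπ' b₀ L hb hL heq
    exact ⟨W.length, ⟨W, hW, hWp, rfl⟩, le_of_eq (hWl.trans hm.symm)⟩
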